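/- Let T ≥ 1, δ : Fin T → ℝ≥0, and P' : Fin T → (0,1) with P' k ≤ 1 - e^{-δ k} for all k. Define Q+ = (∏_k (1 - P' k)) / (∑_k P' k + ∏_k (1 - P' k)). Then -log Q+ ≤ (∏_k e^{δ k}) · (∑_k (1 - e^{-δ k})). -/

import Mathlib

theorem stmt_9 (T : ℕ) (hT : 1 ≤ T)
    (δ : Fin T → ℝ) (hδ : ∀ k, 0 ≤ δ k)
    (P' : Fin T → ℝ) (hP' : ∀ k, P' k ∈ Set.Ioo (0:ℝ) 1)
    (h1 : ∀ k, P' k ≤ 1 - Real.exp (-δ k)) :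
    -Real.log ((∏ k, (1 - P' k)) / (∑ k, P' k + ∏ k, (1 - P' k))) ≤
      (∏ k, Real.exp (δ k)) * ∑ k, (1 - Real.exp (-δ k)) := by
  set A := ∏ k, (1 - P' k) with hA
  set S := ∑ k, P' k with hS
  have hApos : 0 < A := Finset.prod_pos (fun k _ => by have := (hP' k).2; linarith)
  have hSpos : 0 ≤ S := Finset.sum_nonneg (fun k _ => (hP' k).1.le)
  have hSA : 0 < S + A := by linarith
  have h2 : -Real.log (A / (S + A)) = Real.log ((S + A) / A) := by
    rw [← Real.log_inv]; congr 1; field_simp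
  rw [h2]
  have h3 : Real.log ((S + A) / A) ≤ S / A := by
    have := Real.log_le_sub_one_of_pos (show (0:ℝ) < (S + A) / A from div_pos hSA hApos)
    have heq : (S + A) / A - 1 = S / A := by field_simp; ring
    linarith [heq ▸ this]
  refine h3.trans ?_
  -- S/A ≤ S * ∏ exp δ ≤ (∑ (1 - exp(-δ))) * ∏ exp δ
  have hAge : (∏ k, Real.exp (-δ k)) ≤ A := by
    apply Finset.prod_le_prod (fun k _ => (Real.exp_pos _).le)
    intro k _; linarith [h1 k]
  have hprod : (∏ k, Real.exp (-δ k)) = (∏ k, Real.exp (δ k))⁻¹ := by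
    rw [← Finset.prod_inv_distrib]
    exact Finset.prod_congr rfl (fun k _ => by rw [← Real.exp_neg])
  have hEpos : 0 < ∏ k, Real.exp (δ k) := Finset.prod_pos (fun k _ => Real.exp_pos _)
  have hinv : A⁻¹ ≤ ∏ k, Real.exp (δ k) := by
    rw [← inv_inv (∏ k, Real.exp (δ k))]
    exact inv_anti₀ (by positivity) (hprod ▸ hAge)
  have hSle : S ≤ ∑ k, (1 - Real.exp (-δ k)) :=
    Finset.sum_le_sum (fun k _ => by linarith [h1 k])
  calc S / A = S * A⁻¹ := div_eq_mul_inv S A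
    _ ≤ (∑ k, (1 - Real.exp (-δ k))) * (∏ k, Real.exp (δ k)) :=
        mul_le_mul hSle hinv (by positivity) (hSpos.trans hSle)
    _ = (∏ k, Real.exp (δ k)) * ∑ k, (1 - Real.exp (-δ k)) := mul_comm _ _
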